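/- Let R be a factorial domain (UFD) contained in a field F, and let y ∈ F be algebraic over R (i.e., over the fraction field of R) but not integral over R. Then the ideal c ⊲ R consisting of all x ∈ R such that x·y is integral over R is a principal ideal. -/

import Mathlib

open Polynomial IsFractionRing UniqueFactorizationMonoid

/-- In a GCD monoid, if `b` divides `x ^ m` and `y ^ m`, it divides `gcd x y ^ m`. -/
theorem aux_dvd_pow_gcd {R : Type*} [CommMonoidWithZero R] [IsCancelMulZero R] [GCDMonoid R]
    {b x y : R} {m : ℕ} (hx : b ∣ x ^ m) (hy : b ∣ y ^ m) : b ∣ gcd x y ^ m := by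
  rcases eq_or_ne (gcd x y) 0 with hg | hg
  · rcases Nat.eq_zero_or_pos m with rfl | hm
    · simpa using hx
    · rw [hg, zero_pow hm.ne']
      exact dvd_zero b
  · obtain ⟨x₁, hx₁⟩ := gcd_dvd_left x y
    obtain ⟨y₁, hy₁⟩ := gcd_dvd_right x y
    have hrel : IsRelPrime x₁ y₁ := by
      intro d hdx hdy
      have h1 : gcd x y * d ∣ x :=
        (mul_dvd_mul_left (gcd x y) hdx).trans (dvd_of_eq hx₁.symm)
      have h2 : gcd x y * d ∣ y :=
        (mul_dvd_mul_left (gcd x y) hdy).trans (dvd_of_eq hy₁.symm)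
      obtain ⟨e, he⟩ := dvd_gcd h1 h2
      have h3 : gcd x y * 1 = gcd x y * (d * e) := by
        rw [mul_one, ← mul_assoc, ← he]
      exact IsUnit.of_mul_eq_one (a := d) e (mul_left_cancel₀ hg h3).symm
    have h1 : b ∣ gcd (x ^ m) (y ^ m) := dvd_gcd hx hy
    have h2 : Associated (gcd (x ^ m) (y ^ m)) (gcd x y ^ m * gcd (x₁ ^ m) (y₁ ^ m)) := by
      have := gcd_mul_left' (gcd x y ^ m) (x₁ ^ m) (y₁ ^ m)
      rw [← mul_pow, ← mul_pow, ← hx₁, ← hy₁] at this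
      exact this
    have hu : IsUnit (gcd (x₁ ^ m) (y₁ ^ m)) :=
      (hrel.pow) (gcd_dvd_left _ _) (gcd_dvd_right _ _)
    have hassoc : Associated (gcd x y ^ m * gcd (x₁ ^ m) (y₁ ^ m)) (gcd x y ^ m) :=
      associated_mul_unit_left _ _ hu
    exact (h1.trans h2.dvd).trans hassoc.dvd

/-- In a UFD, if `a ∣ b`, `b ≠ 0` and `b` has at least as few factors as `a`, then `b ∣ a`. -/
theorem aux_dvd_of_card_le {R : Type*} [CommMonoidWithZero R] [IsCancelMulZero R] [NormalizationMonoid R]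
    [UniqueFactorizationMonoid R] {a b : R} (hab : a ∣ b) (hb : b ≠ 0)
    (hcard : Multiset.card (normalizedFactors b) ≤ Multiset.card (normalizedFactors a)) :
    b ∣ a := by
  obtain ⟨c, rfl⟩ := hab
  have ha : a ≠ 0 := left_ne_zero_of_mul hb
  have hc : c ≠ 0 := right_ne_zero_of_mul hb
  rw [normalizedFactors_mul ha hc, Multiset.card_add] at hcard
  have h0 : normalizedFactors c = 0 := by
    rw [← Multiset.card_eq_zero]
    omega
  have hu : IsUnit c := by
    have h := prod_normalizedFactors hc
    rw [h0, Multiset.prod_zero] at h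
    exact h.isUnit isUnit_one
  exact (associated_mul_unit_left a c hu).dvd

/-- `c * t` is "integral" (in the image of `R`) iff the denominator of `c` divides `t`. -/
theorem aux_isInteger_iff {R K : Type*} [CommRing R] [IsDomain R] [UniqueFactorizationMonoid R]
    [Field K] [Algebra R K] [IsFractionRing R K] (c : K) (t : R) :
    (∃ r : R, algebraMap R K r = c * algebraMap R K t) ↔ (den R c : R) ∣ t := by
  have hden : algebraMap R K (den R c : R) ≠ 0 :=
    IsFractionRing.to_map_ne_zero_of_mem_nonZeroDivisors (den R c).2
  have hcd : c * algebraMap R K (den R c : R) = algebraMap R K (num R c) :=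
    num_mul_den_eq_num_iff_eq.mpr rfl
  constructor
  · rintro ⟨r, hr⟩
    have key : algebraMap R K (r * (den R c : R)) = algebraMap R K (num R c * t) := by
      rw [map_mul, map_mul, hr, mul_comm c (algebraMap R K t), mul_assoc, hcd]
      ring
    have key' : r * (den R c : R) = num R c * t := IsFractionRing.injective R K key
    have hdvd : (den R c : R) ∣ num R c * t := Dvd.intro_left r key'
    exact (num_den_reduced R c).symm.dvd_of_dvd_mul_left hdvd
  · rintro ⟨s, rfl⟩
    refine ⟨num R c * s, ?_⟩
    rw [map_mul, map_mul, ← hcd]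
    ring

/- If `R` is a UFD contained in a field `F` and `y ∈ F` is algebraic but not
integral over `R`, then `{x ∈ R : x·y is integral over R}` is a principal
ideal of `R`. -/
theorem integrality_ideal_is_principal {R F : Type*} [CommRing R] [IsDomain R]
    [UniqueFactorizationMonoid R] [Field F] [Algebra R F]
    (hinj : Function.Injective (algebraMap R F))
    (y : F) (halg : IsAlgebraic R y) (hni : ¬ IsIntegral R y) :
    ∃ I : Ideal R,
      (∀ x : R, x ∈ I ↔ IsIntegral R (algebraMap R F x * y)) ∧
      Submodule.IsPrincipal I := by
  classical
  letI : NormalizationMonoid R := UniqueFactorizationMonoid.normalizationMonoid.toNormalizationMonoid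
  letI : GCDMonoid R := UniqueFactorizationMonoid.toGCDMonoid R
  haveI : FaithfulSMul R F := (faithfulSMul_iff_algebraMap_injective R F).mpr hinj
  letI : Algebra (FractionRing R) F := FractionRing.liftAlgebra R F
  haveI : IsScalarTower R (FractionRing R) F := FractionRing.isScalarTower_liftAlgebra R F
  set K := FractionRing R with hK
  have hinjK : Function.Injective (algebraMap R K) := IsFractionRing.injective R K
  have hinjKF : Function.Injective (algebraMap K F) := (algebraMap K F).injective
  have halgK : IsAlgebraic K y := halg.extendScalars hinjK
  have hyK : IsIntegral K y := halgK.isIntegral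
  set q : Polynomial K := minpoly K y with hq
  set n : ℕ := q.natDegree with hn
  have hqmonic : q.Monic := minpoly.monic hyK
  have hq0 : q ≠ 0 := hqmonic.ne_zero
  have hnpos : 0 < n := minpoly.natDegree_pos hyK
  -- the divisibility predicate
  set P : R → Prop := fun x => ∀ i < n, (den R (q.coeff i) : R) ∣ x ^ (n - i) with hP
  -- characterization of integrality by P
  have char : ∀ x : R, IsIntegral R (algebraMap R F x * y) ↔ P x := by
    intro x
    rcases eq_or_ne x 0 with rfl | hx
    · constructor
      · intro _ i hi
        rw [zero_pow (by omega : n - i ≠ 0)]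
        exact dvd_zero _
      · intro _
        rw [map_zero, zero_mul]
        exact isIntegral_zero
    · have hx' : algebraMap R K x ≠ 0 := fun h => hx (hinjK (by rwa [map_zero]))
      have hxF : algebraMap R F x = algebraMap K F (algebraMap R K x) :=
        (IsScalarTower.algebraMap_apply R K F x)
      have hroot : aeval (algebraMap R F x * y) (q.scaleRoots (algebraMap R K x)) = 0 := by
        rw [hxF]
        exact scaleRoots_aeval_eq_zero (minpoly.aeval K y)
      constructor
      · -- integral → coefficient conditions
        intro hint
        set z := algebraMap R F x * y with hz
        have hzK : IsIntegral K z := hint.tower_top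
        have hp0 : minpoly K z ≠ 0 := minpoly.ne_zero hzK
        have hpmonic : (minpoly K z).Monic := minpoly.monic hzK
        have hdvd : minpoly K z ∣ q.scaleRoots (algebraMap R K x) := minpoly.dvd K z hroot
        have hSne : q.scaleRoots (algebraMap R K x) ≠ 0 := scaleRoots_ne_zero hq0 _
        have hdeg1 : (minpoly K z).natDegree ≤ n := by
          have := Polynomial.natDegree_le_of_dvd hdvd hSne
          rwa [natDegree_scaleRoots] at this
        -- reverse scaling shows the degrees agree
        have hroot2 : aeval y ((minpoly K z).scaleRoots (algebraMap R K x)⁻¹) = 0 := by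
          have h0 : aeval z (minpoly K z) = 0 := minpoly.aeval K z
          have := scaleRoots_aeval_eq_zero (r := (algebraMap R K x)⁻¹) h0
          have hy' : algebraMap K F (algebraMap R K x)⁻¹ * z = y := by
            rw [hz, hxF, map_inv₀, ← mul_assoc, inv_mul_cancel₀ (fun h => hx' (hinjKF (by rwa [map_zero]))), one_mul]
          rwa [hy'] at this
        have hdeg2 : n ≤ (minpoly K z).natDegree := by
          have hdvd2 : q ∣ (minpoly K z).scaleRoots (algebraMap R K x)⁻¹ :=
            minpoly.dvd K y hroot2
          have hTne : (minpoly K z).scaleRoots (algebraMap R K x)⁻¹ ≠ 0 :=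
            scaleRoots_ne_zero hp0 _
          have := Polynomial.natDegree_le_of_dvd hdvd2 hTne
          rwa [natDegree_scaleRoots] at this
        have hSmonic : (q.scaleRoots (algebraMap R K x)).Monic :=
          (monic_scaleRoots_iff _).mpr hqmonic
        have heq : q.scaleRoots (algebraMap R K x) = minpoly K z := by
          refine Polynomial.eq_of_monic_of_dvd_of_natDegree_le hpmonic hSmonic hdvd ?_
          rw [natDegree_scaleRoots]
          exact hdeg2
        -- coefficients of `minpoly K z` are in the image of `R`
        have hcoeff : ∀ i, ∃ r : R, algebraMap R K r = (minpoly K z).coeff i := by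
          have h1 : minpoly K z = (minpoly R z).map (algebraMap R K) :=
            minpoly.isIntegrallyClosed_eq_field_fractions' K hint
          intro i
          exact ⟨(minpoly R z).coeff i, by rw [h1, coeff_map]⟩
        intro i hi
        have := hcoeff i
        rw [← heq, coeff_scaleRoots] at this
        rw [← aux_isInteger_iff (q.coeff i) (x ^ (n - i))]
        obtain ⟨r, hr⟩ := this
        exact ⟨r, by rw [hr, map_pow]⟩
      · -- coefficient conditions → integral
        intro hPx
        have hcoeff : ∀ i, (q.scaleRoots (algebraMap R K x)).coeff i ∈
            Set.range (algebraMap R K) := by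
          intro i
          rcases lt_trichotomy i n with hi | rfl | hi
          · have := (aux_isInteger_iff (q.coeff i) (x ^ (n - i))).mpr (hPx i hi)
            obtain ⟨r, hr⟩ := this
            exact ⟨r, by rw [hr, coeff_scaleRoots, map_pow]⟩
          · refine ⟨1, ?_⟩
            rw [coeff_scaleRoots, Nat.sub_self, pow_zero, mul_one]
            have : q.coeff n = 1 := hqmonic
            rw [this, map_one]
          · refine ⟨0, ?_⟩
            rw [coeff_scaleRoots, Polynomial.coeff_eq_zero_of_natDegree_lt hi, zero_mul, map_zero]
        have hlift : q.scaleRoots (algebraMap R K x) ∈ Polynomial.lifts (algebraMap R K) :=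
          (Polynomial.lifts_iff_coeff_lifts _).mpr hcoeff
        have hSmonic : (q.scaleRoots (algebraMap R K x)).Monic :=
          (monic_scaleRoots_iff _).mpr hqmonic
        obtain ⟨p, hpmap, _, hpmonic⟩ :=
          Polynomial.lifts_and_degree_eq_and_monic hlift hSmonic
        refine ⟨p, hpmonic, ?_⟩
        have : aeval (algebraMap R F x * y) (p.map (algebraMap R K)) = 0 := by
          rw [hpmap]; exact hroot
        rwa [aeval_map_algebraMap] at this
  -- a nonzero element satisfying `P`
  obtain ⟨a, ha0, haw⟩ := halg.exists_integral_multiple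
  have haP : P a := (char a).mp (by rwa [Algebra.smul_def] at haw)
  -- choose an element of minimal factor count among nonzero divisors of `a` satisfying `P`
  have hex : ∃ k : ℕ, ∃ g : R, g ≠ 0 ∧ g ∣ a ∧ P g ∧ Multiset.card (normalizedFactors g) = k :=
    ⟨_, a, ha0, dvd_rfl, haP, rfl⟩
  obtain ⟨d, hd0, hda, hdP, hdcard⟩ := Nat.find_spec hex
  refine ⟨Ideal.span {d}, ?_, ⟨⟨d, rfl⟩⟩⟩
  intro x
  rw [Ideal.mem_span_singleton, char x]
  constructor
  · -- d ∣ x → P x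
    rintro ⟨e, rfl⟩ i hi
    exact (hdP i hi).trans (pow_dvd_pow_of_dvd (dvd_mul_right d e) _)
  · -- P x → d ∣ x
    intro hPx
    have hgP : P (gcd d x) := by
      intro i hi
      exact aux_dvd_pow_gcd (hdP i hi) (hPx i hi)
    have hg0 : gcd d x ≠ 0 := fun h => hd0 (zero_dvd_iff.mp (h ▸ gcd_dvd_left d x))
    have hgda : gcd d x ∣ a := (gcd_dvd_left d x).trans hda
    have hmin : Multiset.card (normalizedFactors d) ≤
        Multiset.card (normalizedFactors (gcd d x)) := by
      rw [hdcard]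
      exact Nat.find_min' hex ⟨gcd d x, hg0, hgda, hgP, rfl⟩
    have : d ∣ gcd d x := aux_dvd_of_card_le (gcd_dvd_left d x) hd0 hmin
    exact this.trans (gcd_dvd_right d x)
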